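/- Let κ ≤ 0 and define χ(s,t) = t if s = 0 and χ(s,t) = sinh(st)/s otherwise. Let m ≥ 1 and δ > 0. Define K(r,δ) = r^{1−2m}·(∫_{1/3}^r G(t)^{1−2m} dt)^{(1+δ)²} / G(r)^{(1−2m)(1+δ)}, where G satisfies t ≤ G(t) ≤ χ(√(−κ), t) for t > 0. If κ = 0 (so G(t) = t is forced in the bounds, i.e., t ≤ G(t) ≤ t), then log⁺ K(r,δ) ≤ (2m−1)δ·log r + (1+δ)²·log⁺log r + O(1) for r > 1. -/
import Mathlib


/-- `χ(s,t) = t` if `s = 0`, and `sinh(st)/s` otherwise. -/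
noncomputable def chi (s t : ℝ) : ℝ := if s = 0 then t else Real.sinh (s * t) / s

/-- `log⁺ x = max (log x) 0`. -/
noncomputable def posLog (x : ℝ) : ℝ := max (Real.log x) 0

/-- Estimate of the error factor `K(r,δ)` in the calculus lemma, in the case `κ = 0`:
`log⁺ K(r,δ) ≤ (2m−1)δ log r + (1+δ)² log⁺ log r + O(1)` for `r > 1`. -/
theorem K_estimate_flat_case
    (κ : ℝ) (hκ : κ ≤ 0) (m : ℕ) (hm : 1 ≤ m) (δ : ℝ) (hδ : 0 < δ)
    (G : ℝ → ℝ)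
    (hG : ∀ t > (0:ℝ), t ≤ G t ∧ G t ≤ chi (Real.sqrt (-κ)) t)
    (K : ℝ → ℝ)
    (hK : ∀ r > (1:ℝ), K r =
      r ^ ((1:ℝ) - 2 * m) *
        (∫ t in (1/3:ℝ)..r, G t ^ ((1:ℝ) - 2 * m)) ^ ((1 + δ) ^ 2) /
          G r ^ (((1:ℝ) - 2 * m) * (1 + δ)))
    (hκ0 : κ = 0) :
    ∃ C : ℝ, ∀ r > (1:ℝ),
      posLog (K r) ≤ (2 * (m:ℝ) - 1) * δ * Real.log r +
        (1 + δ) ^ 2 * posLog (Real.log r) + C := by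
  -- G is the identity on positive reals
  have hGid : ∀ t > (0:ℝ), G t = t := by
    intro t ht
    have h := hG t ht
    have : chi (Real.sqrt (-κ)) t = t := by
      simp [chi, hκ0]
    rw [this] at h
    exact le_antisymm h.2 h.1
  set a : ℝ := (1:ℝ) - 2 * m with ha_def
  set b : ℝ := (1 + δ) ^ 2 with hb_def
  have hb : 0 < b := by positivity
  have hm1 : (1:ℝ) ≤ (m:ℝ) := by exact_mod_cast hm
  have ha : a ≤ -1 := by simp only [ha_def]; linarith
  set c : ℝ := ((1:ℝ)/3) ^ (a + 1) with hc_def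
  have hc : 0 < c := Real.rpow_pos_of_pos (by norm_num) _
  have hlogc : Real.log c = (a + 1) * Real.log (1/3) := Real.log_rpow (by norm_num) _
  have hlogc0 : 0 ≤ Real.log c := by
    rw [hlogc]
    have h13 : Real.log ((1:ℝ)/3) < 0 := Real.log_neg (by norm_num) (by norm_num)
    nlinarith
  have hlog3 : (0:ℝ) ≤ Real.log (1 + Real.log 3) :=
    Real.log_nonneg (by nlinarith [Real.log_nonneg (by norm_num : (1:ℝ) ≤ 3)])
  refine ⟨b * (Real.log c + Real.log (1 + Real.log 3)), ?_⟩
  intro r hr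
  have hr0 : (0:ℝ) < r := by linarith
  have hlr : 0 < Real.log r := Real.log_pos hr
  have h13r : (1:ℝ)/3 ≤ r := by linarith
  have hIcc : ∀ t ∈ Set.uIcc ((1:ℝ)/3) r, 0 < t := by
    intro t ht
    rw [Set.uIcc_of_le h13r] at ht
    linarith [ht.1]
  -- the integrand equals t ^ a on the interval
  have hcong : (∫ t in (1/3:ℝ)..r, G t ^ a) = ∫ t in (1/3:ℝ)..r, t ^ a := by
    apply intervalIntegral.integral_congr
    intro t ht
    show G t ^ a = t ^ a
    rw [hGid t (hIcc t ht)]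
  set I : ℝ := ∫ t in (1/3:ℝ)..r, t ^ a with hI_def
  have hcont : ContinuousOn (fun t : ℝ => t ^ a) (Set.uIcc ((1:ℝ)/3) r) := by
    apply ContinuousOn.rpow_const continuousOn_id
    intro t ht
    exact Or.inl (ne_of_gt (hIcc t ht))
  have hint : IntervalIntegrable (fun t : ℝ => t ^ a) MeasureTheory.volume ((1:ℝ)/3) r :=
    hcont.intervalIntegrable
  have hcont' : ContinuousOn (fun t : ℝ => c * t⁻¹) (Set.uIcc ((1:ℝ)/3) r) := by
    apply ContinuousOn.mul continuousOn_const
    exact ContinuousOn.inv₀ continuousOn_id (fun t ht => ne_of_gt (hIcc t ht))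
  have hint' : IntervalIntegrable (fun t : ℝ => c * t⁻¹) MeasureTheory.volume ((1:ℝ)/3) r :=
    hcont'.intervalIntegrable
  have hIpos : 0 < I := by
    apply intervalIntegral.intervalIntegral_pos_of_pos_on hint
    · intro t ht
      exact Real.rpow_pos_of_pos (by linarith [ht.1] : (0:ℝ) < t) _
    · linarith
  -- bound the integral
  have hIB : I ≤ c * (Real.log 3 + Real.log r) := by
    have h1 : I ≤ ∫ t in (1/3:ℝ)..r, c * t⁻¹ := by
      apply intervalIntegral.integral_mono_on h13r hint hint'
      intro t ht
      have ht0 : (0:ℝ) < t := by linarith [ht.1]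
      have : t ^ a = t ^ (a + 1) * t⁻¹ := by
        rw [← Real.rpow_neg_one t, ← Real.rpow_add ht0]
        ring_nf
      rw [this]
      apply mul_le_mul_of_nonneg_right _ (by positivity)
      exact Real.rpow_le_rpow_of_nonpos (by norm_num) ht.1 (by linarith)
    have h2 : (∫ t in (1/3:ℝ)..r, c * t⁻¹) = c * Real.log (r / (1/3)) := by
      rw [intervalIntegral.integral_const_mul, integral_inv]
      rw [Set.uIcc_of_le h13r]
      intro h; exact absurd h.1 (by norm_num)
    have h3 : Real.log (r / (1/3)) = Real.log 3 + Real.log r := by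
      rw [show r / ((1:ℝ)/3) = 3 * r by ring, Real.log_mul (by norm_num) (ne_of_gt hr0)]
    rw [h2, h3] at h1
    exact h1
  -- log of the integral
  have hlogI : Real.log I ≤ Real.log c + Real.log (1 + Real.log 3) + posLog (Real.log r) := by
    have hM : (0:ℝ) < max 1 (Real.log r) := lt_of_lt_of_le one_pos (le_max_left _ _)
    have hlog3' : (0:ℝ) ≤ Real.log 3 := Real.log_nonneg (by norm_num)
    have hb1 : Real.log 3 + Real.log r ≤ (1 + Real.log 3) * max 1 (Real.log r) := by
      have h4 : Real.log r ≤ max 1 (Real.log r) := le_max_right _ _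
      have h5 : Real.log 3 ≤ Real.log 3 * max 1 (Real.log r) := by
        nlinarith [le_max_left 1 (Real.log r)]
      nlinarith
    have h6 : I ≤ c * ((1 + Real.log 3) * max 1 (Real.log r)) := by
      calc I ≤ c * (Real.log 3 + Real.log r) := hIB
        _ ≤ c * ((1 + Real.log 3) * max 1 (Real.log r)) := by
            apply mul_le_mul_of_nonneg_left hb1 hc.le
    calc Real.log I ≤ Real.log (c * ((1 + Real.log 3) * max 1 (Real.log r))) :=
          Real.log_le_log hIpos h6
      _ = Real.log c + (Real.log (1 + Real.log 3) + Real.log (max 1 (Real.log r))) := by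
          rw [Real.log_mul (ne_of_gt hc) (by positivity), Real.log_mul (by positivity) (ne_of_gt hM)]
      _ = Real.log c + Real.log (1 + Real.log 3) + posLog (Real.log r) := by
          have : Real.log (max 1 (Real.log r)) = posLog (Real.log r) := by
            rcases le_total (Real.log r) 1 with h | h
            · rw [max_eq_left h, Real.log_one, posLog,
                max_eq_right (Real.log_nonpos hlr.le h)]
            · rw [max_eq_right h, posLog, max_eq_left (Real.log_nonneg h)]
          rw [this]; ring
  -- compute log K
  have hKr := hK r hr
  rw [hGid r hr0, hcong] at hKr
  have hrne : ∀ y : ℝ, r ^ y ≠ 0 := fun y => ne_of_gt (Real.rpow_pos_of_pos hr0 y)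
  have hIne : I ^ b ≠ 0 := ne_of_gt (Real.rpow_pos_of_pos hIpos b)
  have hlogK : Real.log (K r) = (2 * (m:ℝ) - 1) * δ * Real.log r + b * Real.log I := by
    rw [hKr, Real.log_div (mul_ne_zero (hrne a) hIne) (hrne (a * (1 + δ))),
      Real.log_mul (hrne a) hIne, Real.log_rpow hr0, Real.log_rpow hIpos,
      Real.log_rpow hr0]
    simp only [ha_def]
    ring
  have hKle : Real.log (K r) ≤ (2 * (m:ℝ) - 1) * δ * Real.log r +
      b * posLog (Real.log r) + b * (Real.log c + Real.log (1 + Real.log 3)) := by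
    rw [hlogK]
    have h7 := mul_le_mul_of_nonneg_left hlogI hb.le
    have h8 : b * (Real.log c + Real.log (1 + Real.log 3) + posLog (Real.log r)) =
        b * posLog (Real.log r) + b * (Real.log c + Real.log (1 + Real.log 3)) := by ring
    linarith
  have hRHS0 : 0 ≤ (2 * (m:ℝ) - 1) * δ * Real.log r +
      b * posLog (Real.log r) + b * (Real.log c + Real.log (1 + Real.log 3)) := by
    have h1 : 0 ≤ (2 * (m:ℝ) - 1) * δ * Real.log r := by
      apply mul_nonneg (mul_nonneg (by linarith) hδ.le) hlr.le
    have h2 : 0 ≤ posLog (Real.log r) := le_max_right _ _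
    have h3 : 0 ≤ b * (Real.log c + Real.log (1 + Real.log 3)) := by positivity
    have h4 : 0 ≤ b * posLog (Real.log r) := mul_nonneg hb.le h2
    linarith
  have : posLog (K r) ≤ (2 * (m:ℝ) - 1) * δ * Real.log r +
      b * posLog (Real.log r) + b * (Real.log c + Real.log (1 + Real.log 3)) :=
    max_le hKle hRHS0
  linarith [this]
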